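/- Let x₁,…,x_T ∈ ℝ^d with ‖x_t‖₂ ≤ G and λ ≥ max{1, G²}, and A_t = λI + ∑_{s=1}^t x_s x_s^T. Then ∑_{t=1}^T ‖x_t‖²_{A_{t-1}^{-1}} ≤ 2 log(det(A_T)/det(λI)) ≤ 2d log(1 + TG²/(λd)). -/

import Mathlib

open Matrix

lemma vecMulVec_mulVec' {d : ℕ} (u v : Fin d → ℝ) :
    vecMulVec u u *ᵥ v = (u ⬝ᵥ v) • u := by
  ext i
  simp [vecMulVec_apply, mulVec, dotProduct, Finset.sum_mul, Finset.mul_sum]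
  congr 1; ext j; ring

lemma psd_vmv {d : ℕ} (u : Fin d → ℝ) : (vecMulVec u u).PosSemidef := by
  refine PosSemidef.of_dotProduct_mulVec_nonneg ?_ ?_
  · ext i j; simp [vecMulVec_apply, mul_comm]
  · intro v
    rw [vecMulVec_mulVec']
    simp only [star_trivial, dotProduct_smul, smul_eq_mul]
    rw [dotProduct_comm]
    exact mul_self_nonneg _

lemma psd_sum {d : ℕ} (x : ℕ → Fin d → ℝ) (t : ℕ) :
    (∑ s ∈ Finset.range t, vecMulVec (x s) (x s)).PosSemidef := by
  induction t with
  | zero => simpa using Matrix.PosSemidef.zero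
  | succ n ih => rw [Finset.sum_range_succ]; exact ih.add (psd_vmv _)

lemma smul_one_mulVec {d : ℕ} (lam : ℝ) (v : Fin d → ℝ) :
    (lam • (1 : Matrix (Fin d) (Fin d) ℝ)) *ᵥ v = lam • v := by
  rw [smul_mulVec, one_mulVec]

lemma pd_smul_one {d : ℕ} {lam : ℝ} (h : 0 < lam) :
    (lam • (1 : Matrix (Fin d) (Fin d) ℝ)).PosDef := by
  refine PosDef.of_dotProduct_mulVec_pos ?_ ?_
  · ext i j; simp [Matrix.one_apply]; split <;> split <;> simp_all <;> omega
  · intro v hv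
    rw [smul_one_mulVec]
    simp only [star_trivial, dotProduct_smul, smul_eq_mul]
    have : 0 < v ⬝ᵥ v := by
      have := dotProduct_star_self_pos_iff (v := v)
      simpa using this.mpr hv
    positivity

lemma pd_M {d : ℕ} {lam : ℝ} (h : 0 < lam) (x : ℕ → Fin d → ℝ) (t : ℕ) :
    ((lam • (1 : Matrix (Fin d) (Fin d) ℝ) + ∑ s ∈ Finset.range t, vecMulVec (x s) (x s))).PosDef :=
  (pd_smul_one h).add_posSemidef (psd_sum x t)

lemma u_nonneg {d : ℕ} {lam : ℝ} (h : 0 < lam) (x : ℕ → Fin d → ℝ) (t : ℕ) (v : Fin d → ℝ) :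
    0 ≤ v ⬝ᵥ ((lam • (1 : Matrix (Fin d) (Fin d) ℝ)
        + ∑ s ∈ Finset.range t, vecMulVec (x s) (x s))⁻¹ *ᵥ v) := by
  have := ((pd_M h x t).inv).posSemidef.dotProduct_mulVec_nonneg v
  simpa using this

lemma u_le_one {d : ℕ} {lam G : ℝ} (x : ℕ → Fin d → ℝ)
    (hx : ∀ t, Real.sqrt (x t ⬝ᵥ x t) ≤ G) (hlam : max 1 (G ^ 2) ≤ lam) (t : ℕ) :
    x t ⬝ᵥ ((lam • (1 : Matrix (Fin d) (Fin d) ℝ)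
        + ∑ s ∈ Finset.range t, vecMulVec (x s) (x s))⁻¹ *ᵥ x t) ≤ 1 := by
  have hlam1 : (1:ℝ) ≤ lam := le_trans (le_max_left _ _) hlam
  have hlamG : G ^ 2 ≤ lam := le_trans (le_max_right _ _) hlam
  have hlam0 : 0 < lam := lt_of_lt_of_le one_pos hlam1
  set A := lam • (1 : Matrix (Fin d) (Fin d) ℝ) + ∑ s ∈ Finset.range t, vecMulVec (x s) (x s) with hA
  have hpd := pd_M hlam0 x t
  set y := A⁻¹ *ᵥ x t with hy
  have hAy : A *ᵥ y = x t := by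
    rw [hy, mulVec_mulVec, Matrix.mul_nonsing_inv _ hpd.det_pos.ne'.isUnit, one_mulVec]
  set u := x t ⬝ᵥ y with hu
  have hu0 : 0 ≤ u := u_nonneg hlam0 x t (x t)
  -- u = y ⬝ Ay ≥ lam * (y⬝y)
  have hsym : y ⬝ᵥ (A *ᵥ y) = u := by
    rw [dotProduct_comm, hAy, hu]
  have hlower : lam * (y ⬝ᵥ y) ≤ u := by
    rw [← hsym, hA, add_mulVec, smul_one_mulVec, dotProduct_add, dotProduct_smul, smul_eq_mul]
    have := (psd_sum x t).dotProduct_mulVec_nonneg y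
    simp only [star_trivial] at this
    linarith
  -- Cauchy-Schwarz
  have hcs : u ^ 2 ≤ (x t ⬝ᵥ x t) * (y ⬝ᵥ y) := by
    have := Finset.sum_mul_sq_le_sq_mul_sq Finset.univ (x t) y
    simpa [hu, dotProduct, pow_two] using this
  have hxG : x t ⬝ᵥ x t ≤ G ^ 2 := by
    have h0 : 0 ≤ x t ⬝ᵥ x t := by simpa [star_trivial] using dotProduct_star_self_nonneg (x t)
    have := hx t
    nlinarith [Real.sq_sqrt h0, Real.sqrt_nonneg (x t ⬝ᵥ x t)]
  have hyy : 0 ≤ y ⬝ᵥ y := by simpa [star_trivial] using dotProduct_star_self_nonneg y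
  nlinarith [mul_le_mul_of_nonneg_right hxG hyy]

lemma det_succ {d : ℕ} {lam : ℝ} (h : 0 < lam) (x : ℕ → Fin d → ℝ) (t : ℕ) :
    (lam • (1 : Matrix (Fin d) (Fin d) ℝ) + ∑ s ∈ Finset.range (t+1), vecMulVec (x s) (x s)).det
    = (lam • (1 : Matrix (Fin d) (Fin d) ℝ) + ∑ s ∈ Finset.range t, vecMulVec (x s) (x s)).det
      * (1 + x t ⬝ᵥ ((lam • (1 : Matrix (Fin d) (Fin d) ℝ)
          + ∑ s ∈ Finset.range t, vecMulVec (x s) (x s))⁻¹ *ᵥ x t)) := by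
  set A := lam • (1 : Matrix (Fin d) (Fin d) ℝ) + ∑ s ∈ Finset.range t, vecMulVec (x s) (x s)
    with hA
  have hpd := pd_M h x t
  have hAinv : A * A⁻¹ = 1 := Matrix.mul_nonsing_inv _ hpd.det_pos.ne'.isUnit
  have h1 : lam • (1 : Matrix (Fin d) (Fin d) ℝ) + ∑ s ∈ Finset.range (t+1), vecMulVec (x s) (x s)
      = A * (1 + replicateCol (Fin 1) (A⁻¹ *ᵥ x t) * replicateRow (Fin 1) (x t)) := by
    rw [Matrix.mul_add, mul_one, ← Matrix.mul_assoc, ← replicateCol_mulVec, mulVec_mulVec, hAinv,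
      one_mulVec, Finset.sum_range_succ, hA, add_assoc, vecMulVec_eq (ι := Fin 1)]
    rfl
  rw [h1, det_mul]
  exact congrArg _ (det_one_add_replicateCol_mul_replicateRow _ _)

lemma le_two_log {u : ℝ} (h0 : 0 ≤ u) (h1 : u ≤ 1) : u ≤ 2 * Real.log (1 + u) := by
  have hpos : (0:ℝ) < 1 + u := by linarith
  rw [show (2:ℝ) * Real.log (1+u) = Real.log ((1+u)^2) by rw [Real.log_pow]; push_cast; ring]
  rw [← Real.exp_le_exp, Real.exp_log (by positivity)]
  have hab : Real.exp (-(u/2)) * Real.exp (u/2) = 1 := by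
    rw [← Real.exp_add]; simp
  have ha : 1 - u/2 ≤ Real.exp (-(u/2)) := by
    have := Real.add_one_le_exp (-(u/2)); linarith
  have hb : Real.exp (u/2) ≤ 1 + u := by
    have hbpos := Real.exp_pos (u/2)
    nlinarith
  have hu : Real.exp u = Real.exp (u/2) ^ 2 := by
    rw [pow_two, ← Real.exp_add]
    congr 1; ring
  rw [hu]
  have := Real.exp_pos (u/2)
  nlinarith

lemma trace_eq_sum_eig {d : ℕ} {A : Matrix (Fin d) (Fin d) ℝ} (hA : A.IsHermitian) :
    A.trace = ∑ i, hA.eigenvalues i := by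
  simpa using hA.trace_eq_sum_eigenvalues

lemma logdet_le {d : ℕ} (hd : 0 < d) {A : Matrix (Fin d) (Fin d) ℝ} (hA : A.PosDef) :
    Real.log A.det ≤ (d:ℝ) * Real.log (A.trace / d) := by
  set μ := hA.isHermitian.eigenvalues with hμ
  have hμpos : ∀ i, 0 < μ i := hA.eigenvalues_pos
  have hdet : A.det = ∏ i, μ i := by
    have := hA.isHermitian.det_eq_prod_eigenvalues
    simpa using this
  have hdd : (0:ℝ) < d := by exact_mod_cast hd
  have hamgm : ∏ i : Fin d, (μ i) ^ ((1:ℝ)/d) ≤ ∑ i : Fin d, (1/(d:ℝ)) * μ i := by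
    apply Real.geom_mean_le_arith_mean_weighted
    · intro i _; positivity
    · simp [Finset.sum_const, Finset.card_univ]
      field_simp
    · intro i _; exact (hμpos i).le
  have hprodpos : (0:ℝ) < ∏ i : Fin d, (μ i) ^ ((1:ℝ)/d) := by
    exact Finset.prod_pos fun i _ => Real.rpow_pos_of_pos (hμpos i) _
  have hlog := Real.log_le_log hprodpos hamgm
  have hlhs : Real.log (∏ i : Fin d, (μ i) ^ ((1:ℝ)/d)) = (1/(d:ℝ)) * Real.log A.det := by
    rw [Real.log_prod (fun i _ => (Real.rpow_pos_of_pos (hμpos i) _).ne'), hdet,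
      Real.log_prod (fun i _ => (hμpos i).ne'), Finset.mul_sum]
    exact Finset.sum_congr rfl fun i _ => Real.log_rpow (hμpos i) _
  have hrhs : ∑ i : Fin d, (1/(d:ℝ)) * μ i = A.trace / d := by
    rw [← Finset.mul_sum, ← trace_eq_sum_eig hA.isHermitian]
    ring
  rw [hlhs, hrhs] at hlog
  calc Real.log A.det = (d:ℝ) * ((1/(d:ℝ)) * Real.log A.det) := by field_simp
    _ ≤ (d:ℝ) * Real.log (A.trace / d) := by
        exact mul_le_mul_of_nonneg_left hlog hdd.le

lemma trace_M {d : ℕ} (lam : ℝ) (x : ℕ → Fin d → ℝ) (T : ℕ) :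
    (lam • (1 : Matrix (Fin d) (Fin d) ℝ) + ∑ s ∈ Finset.range T, vecMulVec (x s) (x s)).trace
    = lam * d + ∑ s ∈ Finset.range T, (x s ⬝ᵥ x s) := by
  rw [Matrix.trace_add, Matrix.trace_smul, Matrix.trace_one, Matrix.trace_sum]
  have hv : ∀ s, (vecMulVec (x s) (x s)).trace = x s ⬝ᵥ x s := fun s => by
    simp [Matrix.trace, Matrix.diag, vecMulVec_apply, dotProduct]
  simp [hv, smul_eq_mul]

theorem elliptical_potential {d : ℕ} (T : ℕ)
    (x : ℕ → Fin d → ℝ) (G lam : ℝ)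
    (hx : ∀ t, Real.sqrt (x t ⬝ᵥ x t) ≤ G)
    (hlam : max 1 (G ^ 2) ≤ lam) :
    (∑ t ∈ Finset.range T,
        x t ⬝ᵥ ((lam • (1 : Matrix (Fin d) (Fin d) ℝ)
          + ∑ s ∈ Finset.range t, vecMulVec (x s) (x s))⁻¹ *ᵥ x t))
      ≤ 2 * Real.log ((lam • (1 : Matrix (Fin d) (Fin d) ℝ)
          + ∑ s ∈ Finset.range T, vecMulVec (x s) (x s)).det
          / (lam • (1 : Matrix (Fin d) (Fin d) ℝ)).det) ∧
    2 * Real.log ((lam • (1 : Matrix (Fin d) (Fin d) ℝ)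
          + ∑ s ∈ Finset.range T, vecMulVec (x s) (x s)).det
          / (lam • (1 : Matrix (Fin d) (Fin d) ℝ)).det)
      ≤ 2 * (d : ℝ) * Real.log (1 + (T : ℝ) * G ^ 2 / (lam * (d : ℝ))) := by
  have hlam1 : (1:ℝ) ≤ lam := le_trans (le_max_left _ _) hlam
  have hlamG : G ^ 2 ≤ lam := le_trans (le_max_right _ _) hlam
  have hlam0 : (0:ℝ) < lam := lt_of_lt_of_le one_pos hlam1
  set M : ℕ → Matrix (Fin d) (Fin d) ℝ := fun t =>
    lam • (1 : Matrix (Fin d) (Fin d) ℝ) + ∑ s ∈ Finset.range t, vecMulVec (x s) (x s) with hM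
  set u : ℕ → ℝ := fun t => x t ⬝ᵥ ((M t)⁻¹ *ᵥ x t) with hu
  have hdetpos : ∀ t, 0 < (M t).det := fun t => (pd_M hlam0 x t).det_pos
  have hu0 : ∀ t, 0 ≤ u t := fun t => u_nonneg hlam0 x t (x t)
  have hu1 : ∀ t, u t ≤ 1 := fun t => u_le_one x hx hlam t
  have hdet0 : (M 0).det = (lam • (1 : Matrix (Fin d) (Fin d) ℝ)).det := by
    simp [hM]
  have hdetsmul : (lam • (1 : Matrix (Fin d) (Fin d) ℝ)).det = lam ^ d := by
    simp [Matrix.det_smul]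
  have hlogstep : ∀ t, Real.log (1 + u t)
      = Real.log ((M (t+1)).det) - Real.log ((M t).det) := by
    intro t
    have hds := det_succ hlam0 x t
    simp only [hM, hu]
    rw [hds, Real.log_mul (hdetpos t).ne' (by have := hu0 t; simp only [hM, hu] at this; nlinarith)]
    ring
  have hsum : ∑ t ∈ Finset.range T, u t
      ≤ 2 * (Real.log ((M T).det) - Real.log ((M 0).det)) := by
    calc ∑ t ∈ Finset.range T, u t ≤ ∑ t ∈ Finset.range T, 2 * Real.log (1 + u t) :=
          Finset.sum_le_sum fun t _ => le_two_log (hu0 t) (hu1 t)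
      _ = 2 * ∑ t ∈ Finset.range T, (Real.log ((M (t+1)).det) - Real.log ((M t).det)) := by
          rw [Finset.mul_sum]; exact Finset.sum_congr rfl fun t _ => by rw [hlogstep t]
      _ = 2 * (Real.log ((M T).det) - Real.log ((M 0).det)) := by
          rw [Finset.sum_range_sub (fun t => Real.log ((M t).det))]
  have hlogdiv : Real.log ((M T).det / (lam • (1 : Matrix (Fin d) (Fin d) ℝ)).det)
      = Real.log ((M T).det) - Real.log ((M 0).det) := by
    rw [Real.log_div (hdetpos T).ne' (by rw [← hdet0]; exact (hdetpos 0).ne'), hdet0]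
  constructor
  · simp only [hM, hu] at hsum hlogdiv ⊢
    rw [hlogdiv]
    exact hsum
  · -- second inequality
    rcases Nat.eq_zero_or_pos d with hd | hd
    · subst hd
      simp [Matrix.det_isEmpty]
    · have hGd : 0 ≤ (T:ℝ) * G ^ 2 / (lam * d) := by positivity
      set c : ℝ := (T:ℝ) * G ^ 2 / (lam * d) with hc
      have hdd : (0:ℝ) < d := by exact_mod_cast hd
      -- trace bound
      have htr : (M T).trace ≤ lam * d * (1 + c) := by
        simp only [hM]
        rw [trace_M]
        have hsumle : ∑ s ∈ Finset.range T, (x s ⬝ᵥ x s) ≤ (T:ℝ) * G ^ 2 := by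
          have : ∀ s ∈ Finset.range T, (x s ⬝ᵥ x s) ≤ G ^ 2 := by
            intro s _
            have h0 : 0 ≤ x s ⬝ᵥ x s := by simpa [star_trivial] using dotProduct_star_self_nonneg (v := x s)
            nlinarith [Real.sq_sqrt h0, hx s, Real.sqrt_nonneg (x s ⬝ᵥ x s)]
          calc ∑ s ∈ Finset.range T, (x s ⬝ᵥ x s) ≤ ∑ s ∈ Finset.range T, G ^ 2 :=
                Finset.sum_le_sum this
            _ = (T:ℝ) * G ^ 2 := by simp [mul_comm]
        have : lam * d * (1 + c) = lam * d + (T:ℝ) * G ^ 2 := by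
          rw [hc]; field_simp; try ring
        linarith
      have hld := logdet_le hd (pd_M hlam0 x T)
      have htrd : (M T).trace / d ≤ lam * (1 + c) := by
        rw [div_le_iff₀ hdd]
        calc (M T).trace ≤ lam * d * (1 + c) := htr
          _ = lam * (1 + c) * d := by ring
      have h1c : (0:ℝ) < 1 + c := by linarith
      have htrpos : 0 < (M T).trace / d := by
        simp only [hM]
        rw [trace_M]
        have : 0 ≤ ∑ s ∈ Finset.range T, (x s ⬝ᵥ x s) :=
          Finset.sum_nonneg fun s _ => by simpa [star_trivial] using dotProduct_star_self_nonneg (v := x s)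
        positivity
      have hlog2 : Real.log ((M T).trace / d) ≤ Real.log lam + Real.log (1 + c) := by
        rw [← Real.log_mul hlam0.ne' h1c.ne']
        exact Real.log_le_log htrpos htrd
      have hfinal : Real.log ((M T).det) ≤ (d:ℝ) * Real.log lam + (d:ℝ) * Real.log (1 + c) := by
        calc Real.log ((M T).det) ≤ (d:ℝ) * Real.log ((M T).trace / d) := hld
          _ ≤ (d:ℝ) * (Real.log lam + Real.log (1 + c)) :=
              mul_le_mul_of_nonneg_left hlog2 hdd.le
          _ = (d:ℝ) * Real.log lam + (d:ℝ) * Real.log (1 + c) := by ring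
      have hlogden : Real.log ((lam • (1 : Matrix (Fin d) (Fin d) ℝ)).det)
          = (d:ℝ) * Real.log lam := by
        rw [hdetsmul, Real.log_pow]
      have hden : Real.log ((M 0).det) = (d:ℝ) * Real.log lam := by
        rw [hdet0, hlogden]
      simp only [hM] at hlogdiv hden hfinal ⊢
      rw [hlogdiv, hden]
      rw [hc] at hfinal ⊢
      linarith
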